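/- Let C be a polygonal curve with vertices p_0, …, p_m and L(C) > 0, and suppose that L(f(C)) = L(C) and that the arclength-parameterized linear interpolations of C and of f(C) coincide: P_{f(C)}(s) = P_C(s) for all s ∈ [0, L(C)]. Then f(C) is equilateral. -/

import Mathlib

open Finset Filter

noncomputable section

/-- The length of the polygonal curve with vertices `p 0, …, p m`
(also the arclength distance from `p 0` to `p m` along the curve). -/
def polyLength {dim : ℕ} (p : ℕ → EuclideanSpace ℝ (Fin dim)) (m : ℕ) : ℝ :=
  ∑ i ∈ Finset.range m, ‖p (i + 1) - p i‖

/-- `P` is the arclength-parameterized linear interpolation of the polygonal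
curve with vertices `p 0, …, p m`:
`P ((1-t)·d_{k-1} + t·d_k) = (1-t)·p_{k-1} + t·p_k` for `t ∈ [0,1]`, `k = 1, …, m`,
where `d_k = polyLength p k` is the arclength up to vertex `k`. -/
def IsArcParam {dim : ℕ} (p : ℕ → EuclideanSpace ℝ (Fin dim)) (m : ℕ)
    (P : ℝ → EuclideanSpace ℝ (Fin dim)) : Prop :=
  ∀ k : ℕ, 1 ≤ k → k ≤ m → ∀ t : ℝ, 0 ≤ t → t ≤ 1 →
    P ((1 - t) * polyLength p (k - 1) + t * polyLength p k)
      = (1 - t) • p (k - 1) + t • p k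

/-- The polygonal curve with vertices `p 0, …, p m` is equilateral:
all consecutive interpoint distances agree. -/
def IsEquilateral {dim : ℕ} (p : ℕ → EuclideanSpace ℝ (Fin dim)) (m : ℕ) : Prop :=
  ∀ k l : ℕ, 1 ≤ k → k ≤ m → 1 ≤ l → l ≤ m →
    ‖p k - p (k - 1)‖ = ‖p l - p (l - 1)‖

/-- `q 0, …, q m` are the vertices of the arclength respacing `f(C)` of the
polygonal curve `C` with vertices `p 0, …, p m`:
`q k = P (k·L(C)/m)` where `P` is the arclength parameterization of `C`;
by convention `f(C) := C` when `L(C) = 0`. -/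
def Respaces {dim : ℕ} (m : ℕ) (p q : ℕ → EuclideanSpace ℝ (Fin dim)) : Prop :=
  (polyLength p m = 0 ∧ ∀ k ≤ m, q k = p k) ∨
  (0 < polyLength p m ∧ ∃ P : ℝ → EuclideanSpace ℝ (Fin dim), IsArcParam p m P ∧
    ∀ k ≤ m, q k = P ((k : ℝ) * polyLength p m / m))

lemma polyLength_mono {dim : ℕ} (p : ℕ → EuclideanSpace ℝ (Fin dim)) :
    Monotone (polyLength p) := by
  apply monotone_nat_of_le_succ
  intro n
  rw [polyLength, polyLength, Finset.sum_range_succ]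
  linarith [norm_nonneg (p (n + 1) - p n)]

lemma polyLength_succ_sub {dim : ℕ} (p : ℕ → EuclideanSpace ℝ (Fin dim)) (k : ℕ)
    (hk : 1 ≤ k) : ‖p k - p (k - 1)‖ = polyLength p k - polyLength p (k - 1) := by
  have h : k = (k - 1) + 1 := by omega
  rw [h, polyLength, Finset.sum_range_succ, ← polyLength]
  simp

lemma seg_eq {dim m : ℕ} (p : ℕ → EuclideanSpace ℝ (Fin dim))
    (P : ℝ → EuclideanSpace ℝ (Fin dim)) (hP : IsArcParam p m P)
    (k : ℕ) (hk1 : 1 ≤ k) (hkm : k ≤ m) (a b : ℝ)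
    (ha : polyLength p (k - 1) ≤ a) (hab : a ≤ b) (hb : b ≤ polyLength p k) :
    ‖P b - P a‖ = b - a := by
  have hnorm := polyLength_succ_sub p k hk1
  set c := polyLength p (k - 1) with hc
  set dk := polyLength p k with hdk
  rcases eq_or_lt_of_le (le_trans ha (le_trans hab hb)) with heq | hlt
  · have hab' : a = b := by linarith
    rw [hab']
    simp
  · set s := (a - c) / (dk - c) with hs
    set t := (b - c) / (dk - c) with ht
    have hdc : 0 < dk - c := by linarith
    have hs0 : 0 ≤ s := div_nonneg (by linarith) hdc.le
    have hs1 : s ≤ 1 := by rw [hs, div_le_one hdc]; linarith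
    have ht0 : 0 ≤ t := div_nonneg (by linarith) hdc.le
    have ht1 : t ≤ 1 := by rw [ht, div_le_one hdc]; linarith
    have hst : s ≤ t := by rw [hs, ht]; gcongr
    have hA : (1 - s) * c + s * dk = a := by
      have h' : s * (dk - c) = a - c := by rw [hs]; exact div_mul_cancel₀ _ hdc.ne'
      linear_combination h'
    have hB : (1 - t) * c + t * dk = b := by
      have h' : t * (dk - c) = b - c := by rw [ht]; exact div_mul_cancel₀ _ hdc.ne'
      linear_combination h'
    have hPa := hP k hk1 hkm s hs0 hs1
    have hPb := hP k hk1 hkm t ht0 ht1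
    rw [hA] at hPa
    rw [hB] at hPb
    have hdiff : P b - P a = (t - s) • (p k - p (k - 1)) := by
      rw [hPa, hPb]; module
    rw [hdiff, norm_smul, Real.norm_eq_abs, abs_of_nonneg (by linarith), hnorm]
    rw [hs, ht]
    field_simp
    ring

lemma lip_vertex {dim m : ℕ} (p : ℕ → EuclideanSpace ℝ (Fin dim))
    (P : ℝ → EuclideanSpace ℝ (Fin dim)) (hP : IsArcParam p m P) :
    ∀ k, k ≤ m → ∀ a, 0 ≤ a → a ≤ polyLength p k →
      ‖P (polyLength p k) - P a‖ ≤ polyLength p k - a := by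
  intro k
  induction k with
  | zero =>
    intro _ a ha0 ha1
    have : a = 0 := by
      have : polyLength p 0 = 0 := by simp [polyLength]
      linarith [this ▸ ha1]
    simp [this, polyLength]
  | succ k ih =>
    intro hkm a ha0 ha1
    rcases le_or_gt (polyLength p k) a with hge | hlt
    · have := seg_eq p P hP (k + 1) (by omega) hkm a (polyLength p (k + 1))
        (by simpa using hge) ha1 le_rfl
      exact le_of_eq this
    · have h1 : ‖P (polyLength p (k + 1)) - P a‖ ≤
          ‖P (polyLength p (k + 1)) - P (polyLength p k)‖ +
          ‖P (polyLength p k) - P a‖ := by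
        have := dist_triangle (P (polyLength p (k + 1))) (P (polyLength p k)) (P a)
        simpa [dist_eq_norm] using this
      have h2 : ‖P (polyLength p (k + 1)) - P (polyLength p k)‖ =
          polyLength p (k + 1) - polyLength p k := by
        have := seg_eq p P hP (k + 1) (by omega) hkm (polyLength p k)
          (polyLength p (k + 1)) (by simp) (polyLength_mono p (by omega)) le_rfl
        simpa using this
      have h3 := ih (by omega) a ha0 hlt.le
      linarith

lemma find_seg {dim : ℕ} (p : ℕ → EuclideanSpace ℝ (Fin dim)) :
    ∀ n, 1 ≤ n → ∀ b : ℝ, 0 ≤ b → b ≤ polyLength p n →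
      ∃ k, 1 ≤ k ∧ k ≤ n ∧ polyLength p (k - 1) ≤ b ∧ b ≤ polyLength p k := by
  intro n
  induction n with
  | zero => omega
  | succ n ih =>
    intro _ b hb0 hb1
    rcases Nat.eq_zero_or_pos n with hn0 | hn1
    · subst hn0
      exact ⟨1, le_rfl, le_rfl, by simpa [polyLength] using hb0, hb1⟩
    · rcases le_or_gt b (polyLength p n) with hle | hgt
      · obtain ⟨k, h1, h2, h3, h4⟩ := ih hn1 b hb0 hle
        exact ⟨k, h1, by omega, h3, h4⟩
      · exact ⟨n + 1, by omega, le_rfl, by simpa using hgt.le, hb1⟩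

lemma lip {dim m : ℕ} (hm : 1 ≤ m) (p : ℕ → EuclideanSpace ℝ (Fin dim))
    (P : ℝ → EuclideanSpace ℝ (Fin dim)) (hP : IsArcParam p m P)
    (a b : ℝ) (ha : 0 ≤ a) (hab : a ≤ b) (hb : b ≤ polyLength p m) :
    ‖P b - P a‖ ≤ b - a := by
  obtain ⟨k, hk1, hkm, hkb1, hkb2⟩ := find_seg p m hm b (le_trans ha hab) hb
  rcases le_or_gt (polyLength p (k - 1)) a with hge | hlt
  · exact le_of_eq (seg_eq p P hP k hk1 hkm a b hge hab hkb2)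
  · have h1 : ‖P b - P a‖ ≤ ‖P b - P (polyLength p (k - 1))‖ +
        ‖P (polyLength p (k - 1)) - P a‖ := by
      have := dist_triangle (P b) (P (polyLength p (k - 1))) (P a)
      simpa [dist_eq_norm] using this
    have h2 : ‖P b - P (polyLength p (k - 1))‖ = b - polyLength p (k - 1) :=
      seg_eq p P hP k hk1 hkm (polyLength p (k - 1)) b le_rfl hkb1 hkb2
    have h3 := lip_vertex p P hP (k - 1) (by omega) a ha hlt.le
    linarith

/-- If `L(f(C)) = L(C)` and the arclength parameterized linear interpolations
of `C` and `f(C)` coincide, then `f(C)` is equilateral. -/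
theorem stmt5 {dim m : ℕ} (hm : 1 ≤ m) (p : ℕ → EuclideanSpace ℝ (Fin dim))
    (hL : 0 < polyLength p m)
    (P : ℝ → EuclideanSpace ℝ (Fin dim)) (hP : IsArcParam p m P)
    (q : ℕ → EuclideanSpace ℝ (Fin dim))
    (hq : ∀ k ≤ m, q k = P ((k : ℝ) * polyLength p m / m))
    (hLeq : polyLength q m = polyLength p m)
    (Q : ℝ → EuclideanSpace ℝ (Fin dim)) (hQ : IsArcParam q m Q)
    (hcoinc : ∀ s : ℝ, 0 ≤ s → s ≤ polyLength p m → Q s = P s) :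
    IsEquilateral q m := by
  have hmR : (0 : ℝ) < m := by exact_mod_cast Nat.pos_of_ne_zero (by omega)
  set L := polyLength p m with hLdef
  have key : ∀ i < m, ‖q (i + 1) - q i‖ ≤ L / m := by
    intro i hi
    rw [hq i hi.le, hq (i + 1) hi]
    have ha : (0 : ℝ) ≤ (i : ℝ) * L / m := by positivity
    have hcast : (i : ℝ) + 1 ≤ (m : ℝ) := by exact_mod_cast hi
    have hab : (i : ℝ) * L / m ≤ ((i + 1 : ℕ) : ℝ) * L / m := by
      push_cast
      gcongr <;> linarith
    have hb : ((i + 1 : ℕ) : ℝ) * L / m ≤ L := by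
      rw [div_le_iff₀ hmR]
      push_cast
      nlinarith [mul_le_mul_of_nonneg_right hcast hL.le]
    have := lip hm p P hP ((i : ℝ) * L / m) (((i + 1 : ℕ) : ℝ) * L / m) ha hab hb
    have heq : ((i + 1 : ℕ) : ℝ) * L / m - (i : ℝ) * L / m = L / m := by
      push_cast; ring
    linarith [heq ▸ this]
  have hsum : ∑ i ∈ Finset.range m, ‖q (i + 1) - q i‖ = ∑ i ∈ Finset.range m, L / m := by
    rw [show (∑ i ∈ Finset.range m, ‖q (i + 1) - q i‖) = polyLength q m from rfl, hLeq,
      Finset.sum_const, Finset.card_range]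
    rw [nsmul_eq_mul, mul_div_assoc']
    exact (mul_div_cancel_left₀ L hmR.ne').symm
  have heach : ∀ i ∈ Finset.range m, ‖q (i + 1) - q i‖ = L / m :=
    (Finset.sum_eq_sum_iff_of_le (fun i hi => key i (Finset.mem_range.mp hi))).mp hsum
  intro k l hk1 hkm hl1 hlm
  have hk := heach (k - 1) (Finset.mem_range.mpr (by omega))
  have hl := heach (l - 1) (Finset.mem_range.mpr (by omega))
  rw [show k - 1 + 1 = k from by omega] at hk
  rw [show l - 1 + 1 = l from by omega] at hl
  rw [hk, hl]
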